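/- Let L be the Laplacian of a connected undirected graph on N vertices, r a unit vector with rᵀL = 0 (so r = 1_N/√N), and R̃ an N×(N-1) matrix whose columns complete r to an orthonormal basis. Then the matrix M = [[-I - L, -L R̃],[R̃ᵀ L, 0]] of size (2N-1)×(2N-1) is Hurwitz: every eigenvalue of M has negative real part. -/

import Mathlib

open Matrix

noncomputable section HurwitzAux

variable {n m : Type*} [Fintype n] [Fintype m] [DecidableEq n]

lemma hurwitz_eigvec_of_mem_spectrum (A : Matrix n n ℂ) (μ : ℂ) (h : μ ∈ spectrum ℂ A) :
    ∃ v ≠ 0, A.mulVec v = μ • v := by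
  rw [spectrum.mem_iff, Matrix.isUnit_iff_isUnit_det, isUnit_iff_ne_zero, not_not] at h
  obtain ⟨v, hv, hmv⟩ := Matrix.exists_mulVec_eq_zero_iff.mpr h
  refine ⟨v, hv, ?_⟩
  rw [sub_mulVec, sub_eq_zero] at hmv
  rw [← hmv]
  ext i
  simp [Matrix.algebraMap_eq_diagonal, mulVec_diagonal, Pi.smul_apply, smul_eq_mul]

/-- complexification of a real matrix -/
def cmx (A : Matrix n m ℝ) : Matrix n m ℂ := A.map Complex.ofRealHom

lemma cmx_conjTranspose (A : Matrix n m ℝ) : (cmx A)ᴴ = cmx Aᵀ := by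
  ext i j; simp [cmx, conjTranspose_apply]

lemma cmx_transpose (A : Matrix n m ℝ) : cmx Aᵀ = (cmx A)ᵀ := by
  ext i j; simp [cmx]

lemma cmx_one : cmx (1 : Matrix n n ℝ) = 1 := by
  ext i j; by_cases h : i = j <;> simp [cmx, Matrix.one_apply, h]

lemma cmx_mul {p : Type*} [Fintype p] (A : Matrix n m ℝ) (B : Matrix m p ℝ)
    [Fintype m] : cmx (A * B) = cmx A * cmx B := by
  simpa [cmx] using Matrix.map_mul (L := A) (M := B) (f := Complex.ofRealHom)

lemma cmx_mulVec_ofReal (A : Matrix n m ℝ) (u : m → ℝ) :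
    (cmx A).mulVec (fun i => (u i : ℂ)) = fun i => ((A.mulVec u i : ℝ) : ℂ) := by
  ext i
  simp [cmx, mulVec, dotProduct]

lemma star_dot_mulVec_conj (B : Matrix n m ℂ) (u : n → ℂ) (w : m → ℂ) :
    star w ⬝ᵥ Bᴴ.mulVec u = starRingEnd ℂ (star u ⬝ᵥ B.mulVec w) := by
  simp only [dotProduct, mulVec, conjTranspose_apply, map_sum, _root_.map_mul,
    Finset.mul_sum, Pi.star_apply, RingHomCompTriple.comp_apply, starRingEnd_apply]
  rw [Finset.sum_comm]
  refine Finset.sum_congr rfl fun i _ => Finset.sum_congr rfl fun j _ => ?_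
  simp [mul_comm, mul_left_comm, star_star]

lemma dot_star_self_eq (x : n → ℂ) :
    star x ⬝ᵥ x = ((∑ i, Complex.normSq (x i) : ℝ) : ℂ) := by
  push_cast
  simp [dotProduct, Complex.normSq_eq_conj_mul_self]

end HurwitzAux

open scoped ComplexOrder
set_option maxHeartbeats 1000000

/-- Let `L` be the Laplacian of a connected undirected graph on `N` vertices
(symmetric PSD, `L 1 = 0`, kernel spanned by `1`), `r = 1/√N · 1` the unit
vector with `rᵀ L = 0`, and `R̃` an orthonormal completion of `r`. Then the
block matrix `M = [[-I - L, -L R̃],[R̃ᵀ L, 0]]` is Hurwitz. -/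
theorem consensus_block_matrix_hurwitz
    (N : ℕ) (hN : 0 < N)
    (L : Matrix (Fin N) (Fin N) ℝ)
    (hLsymm : L.IsSymm)
    (hLpsd : L.PosSemidef)
    (hL1 : L.mulVec (fun _ => 1) = 0)
    (hker : ∀ v : Fin N → ℝ, L.mulVec v = 0 → ∃ c : ℝ, v = fun _ => c)
    (r : Fin N → ℝ) (hr : r = fun _ => 1 / Real.sqrt N)
    (hrL : Matrix.vecMul r L = 0)
    (R : Matrix (Fin N) (Fin (N - 1)) ℝ)
    (hRortho : Rᵀ * R = 1)
    (hRr : Rᵀ.mulVec r = 0)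
    (hcomplete : R * Rᵀ + vecMulVec r r = 1)
    (M : Matrix (Fin N ⊕ Fin (N - 1)) (Fin N ⊕ Fin (N - 1)) ℝ)
    (hM : M = fromBlocks (-1 - L) (-(L * R)) (Rᵀ * L)
        (0 : Matrix (Fin (N - 1)) (Fin (N - 1)) ℝ)) :
    ∀ μ ∈ spectrum ℂ (M.map fun x : ℝ => (x : ℂ)), μ.re < 0 := by
  intro μ hμ
  by_contra hcon
  push_neg at hcon
  obtain ⟨v, hv, hev⟩ := hurwitz_eigvec_of_mem_spectrum _ μ hμ
  set x : Fin N → ℂ := v ∘ Sum.inl with hxdef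
  set y : Fin (N - 1) → ℂ := v ∘ Sum.inr with hydef
  have hvxy : v = Sum.elim x y := by funext i; cases i <;> rfl
  set Lc := cmx L with hLc
  set Rc := cmx R with hRc
  -- the complexified matrix as a block matrix
  have hb1 : (-1 - L).map (fun t : ℝ => (t : ℂ)) = -1 - Lc := by
    rw [hLc]
    ext i j
    by_cases h : i = j <;> simp [cmx, Matrix.one_apply, h]
  have hb2 : (-(L * R)).map (fun t : ℝ => (t : ℂ)) = -(Lc * Rc) := by
    have h0 : (-(L * R)).map (fun t : ℝ => (t : ℂ)) = -(cmx (L * R)) := by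
      ext i j; simp [cmx, Matrix.map_apply, -Matrix.map_mul]
    rw [h0, cmx_mul, ← hLc, ← hRc]
  have hb3 : (Rᵀ * L).map (fun t : ℝ => (t : ℂ)) = Rcᵀ * Lc := by
    have h0 : (Rᵀ * L).map (fun t : ℝ => (t : ℂ)) = cmx (Rᵀ * L) := rfl
    rw [h0, cmx_mul, cmx_transpose, ← hLc, ← hRc]
  have hb4 : (0 : Matrix (Fin (N-1)) (Fin (N-1)) ℝ).map (fun t : ℝ => (t : ℂ))
      = (0 : Matrix (Fin (N-1)) (Fin (N-1)) ℂ) := by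
    ext i j; simp
  have hmap : M.map (fun t : ℝ => (t : ℂ))
      = fromBlocks (-1 - Lc) (-(Lc * Rc)) (Rcᵀ * Lc) 0 := by
    rw [hM, fromBlocks_map, hb1, hb2, hb3, hb4]
  rw [hmap, hvxy, fromBlocks_mulVec] at hev
  have E1 : (-1 - Lc).mulVec x + (-(Lc * Rc)).mulVec y = μ • x := by
    funext i; simpa using congrFun hev (Sum.inl i)
  have E2 : (Rcᵀ * Lc).mulVec x = μ • y := by
    funext i; simpa using congrFun hev (Sum.inr i)
  have E1' : μ • x = -x - Lc.mulVec x - (Lc * Rc).mulVec y := by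
    rw [← E1, sub_mulVec, neg_mulVec, one_mulVec, neg_mulVec]
    abel
  set X : ℝ := ∑ i, Complex.normSq (x i) with hX
  set Y : ℝ := ∑ i, Complex.normSq (y i) with hY
  have hXdot : star x ⬝ᵥ x = (X : ℂ) := dot_star_self_eq x
  have hYdot : star y ⬝ᵥ y = (Y : ℂ) := dot_star_self_eq y
  set q : ℂ := star x ⬝ᵥ Lc.mulVec x with hq
  set z : ℂ := star x ⬝ᵥ (Lc * Rc).mulVec y with hz
  have hD1 : μ * (X : ℂ) = -(X : ℂ) - q - z := by
    have h := congrArg (fun w => star x ⬝ᵥ w) E1'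
    simpa [dotProduct_smul, smul_eq_mul, hXdot, dotProduct_sub, dotProduct_neg] using h
  have hherm : (Lc * Rc)ᴴ = Rcᵀ * Lc := by
    rw [hLc, hRc, conjTranspose_mul, cmx_conjTranspose, cmx_conjTranspose, hLsymm,
      cmx_transpose]
  have hD2 : μ * (Y : ℂ) = starRingEnd ℂ z := by
    have h := congrArg (fun w => star y ⬝ᵥ w) E2
    simp only [dotProduct_smul, smul_eq_mul, hYdot] at h
    rw [← h, ← hherm, star_dot_mulVec_conj]
  have hsum : μ * ((X : ℂ) + (Y : ℂ)) = -(X : ℂ) - q - z + starRingEnd ℂ z := by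
    rw [mul_add, hD1, hD2]
  have hre : μ.re * (X + Y) = -X - q.re := by
    have h := congrArg Complex.re hsum
    simp only [Complex.mul_re, Complex.add_re, Complex.add_im, Complex.sub_re,
      Complex.sub_im, Complex.neg_re, Complex.conj_re, Complex.ofReal_re,
      Complex.ofReal_im] at h
    linarith
  -- positive semidefiniteness of the complexified Laplacian
  have hLcpsd : Lc.PosSemidef := by
    obtain ⟨B, hB⟩ : ∃ B : Matrix (Fin N) (Fin N) ℝ, L = Bᴴ * B := by
      open scoped MatrixOrder Matrix.Norms.L2Operator in
      obtain ⟨B, hB⟩ := CStarAlgebra.nonneg_iff_eq_star_mul_self.mp hLpsd.nonneg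
      exact ⟨B, hB⟩
    have key : (cmx B)ᴴ * (cmx B) = Lc := by
      rw [cmx_conjTranspose, ← cmx_mul, hLc, hB, conjTranspose_eq_transpose_of_trivial]
    rw [← key]
    exact posSemidef_conjTranspose_mul_self _
  have hqre : 0 ≤ q.re := by
    have := hLcpsd.re_dotProduct_nonneg x
    simpa [RCLike.re_to_complex] using this
  have hX0 : 0 ≤ X := Finset.sum_nonneg fun i _ => Complex.normSq_nonneg _
  have hY0 : 0 ≤ Y := Finset.sum_nonneg fun i _ => Complex.normSq_nonneg _
  have hXzero : X = 0 := by nlinarith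
  have hx0 : x = 0 := by
    funext i
    have : Complex.normSq (x i) = 0 :=
      (Finset.sum_eq_zero_iff_of_nonneg
        (fun j _ => Complex.normSq_nonneg (x j))).mp (hX.symm.trans hXzero) i
        (Finset.mem_univ i)
    simpa using Complex.normSq_eq_zero.mp this
  -- from the first block equation, (Lc * Rc) y = 0
  have hLRy : (Lc * Rc).mulVec y = 0 := by
    have h := E1'
    rw [hx0] at h
    simp only [smul_zero, mulVec_zero, neg_zero, zero_sub] at h
    have : (0 : Fin N → ℂ) = -(Lc * Rc).mulVec y := by simpa using h
    simpa [neg_eq_iff_eq_neg] using this.symm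
  set w : Fin N → ℂ := Rc.mulVec y with hw
  have hLw : Lc.mulVec w = 0 := by rw [hw, mulVec_mulVec, hLRy]
  have hLa : L.mulVec (fun i => (w i).re) = 0 := by
    funext i
    have h := congrArg Complex.re (congrFun hLw i)
    simpa [hLc, cmx, mulVec, dotProduct, Complex.re_sum, Complex.mul_re, Matrix.map_apply] using h
  have hLb : L.mulVec (fun i => (w i).im) = 0 := by
    funext i
    have h := congrArg Complex.im (congrFun hLw i)
    simpa [hLc, cmx, mulVec, dotProduct, Complex.im_sum, Complex.mul_im, Matrix.map_apply] using h
  obtain ⟨ca, hca⟩ := hker _ hLa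
  obtain ⟨cb, hcb⟩ := hker _ hLb
  have hwconst : w = (ca + cb * Complex.I) • (fun _ => (1 : ℂ)) := by
    funext i
    have h1 : (w i).re = ca := congrFun hca i
    have h2 : (w i).im = cb := congrFun hcb i
    simp only [Pi.smul_apply, smul_eq_mul, mul_one]
    rw [← Complex.re_add_im (w i), h1, h2]
  -- Rᵀ 1 = 0
  have hsqrtN : Real.sqrt N ≠ 0 := by
    positivity
  have hR1 : Rᵀ.mulVec (fun _ => (1 : ℝ)) = 0 := by
    have hrs : r = (1 / Real.sqrt N) • (fun _ : Fin N => (1 : ℝ)) := by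
      rw [hr]; funext i; simp
    have h : (0 : Fin (N-1) → ℝ) = (1 / Real.sqrt N) • Rᵀ.mulVec (fun _ => (1 : ℝ)) := by
      rw [← mulVec_smul, ← hrs, hRr]
    rcases smul_eq_zero.mp h.symm with h' | h'
    · exact absurd h' (by simp [hsqrtN])
    · exact h'
  have hRc1 : Rcᵀ.mulVec (fun _ => (1 : ℂ)) = 0 := by
    have h := cmx_mulVec_ofReal Rᵀ (fun _ => (1 : ℝ))
    rw [hR1] at h
    have h2 : (cmx Rᵀ).mulVec (fun _ => (1 : ℂ)) = 0 := by
      convert h using 2 <;> simp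
    rw [cmx_transpose, ← hRc] at h2
    exact h2
  have hRR : Rcᵀ * Rc = 1 := by
    rw [hRc, ← cmx_transpose, ← cmx_mul, hRortho, cmx_one]
  have hy0 : y = 0 := by
    have h1 : y = Rcᵀ.mulVec w := by
      rw [hw, mulVec_mulVec, hRR, one_mulVec]
    rw [h1, hwconst, mulVec_smul, hRc1, smul_zero]
  apply hv
  rw [hvxy, hx0, hy0]
  funext i; cases i <;> rfl
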